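/- Performance-difference decomposition for the augmented MDP: for any policy π on the original MDP with extension π̄, and any extended value function f̄_g with components (f, g) satisfying f̄_g((s⁺,c), a) = 0, the underestimation of the policy value satisfies Q^π(d₀, π) − f̄_g(d₀, π̄) ≤ E_π[ ∑_{t=0}^{T−1} γ^t ( γ·max(g(x_{t+1}), f(x_{t+1}, π)) − f(x_t, a_t) ) + γ^T ( R(x_T) − g(x_T) ) ], where T is the first time the trajectory enters the goal set G, assuming the initial state x₀ ∼ d₀ is not in G almost surely. -/

import Mathlib

open MeasureTheory Classical

/-- Expectation of a real-valued function under a probability mass function. -/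
noncomputable def pexp {σ : Type*} (p : PMF σ) (φ : σ → ℝ) : ℝ :=
  ∑' s, (p s).toReal * φ s

lemma pexp_mem {σ : Type*} [Fintype σ] (p : PMF σ) (φ : σ → ℝ)
    (h : ∀ s, φ s ∈ Set.Icc (0:ℝ) 1) : pexp p φ ∈ Set.Icc (0:ℝ) 1 := by
  rw [pexp, tsum_fintype]
  constructor
  · exact Finset.sum_nonneg fun s _ => mul_nonneg ENNReal.toReal_nonneg (h s).1
  · calc ∑ s, (p s).toReal * φ s ≤ ∑ s, (p s).toReal :=
        Finset.sum_le_sum fun s _ => mul_le_of_le_one_right ENNReal.toReal_nonneg (h s).2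
    _ = 1 := by
        rw [← ENNReal.toReal_sum fun a _ => p.apply_ne_top a, ← tsum_fintype (L := .unconditional _), p.tsum_coe,
          ENNReal.toReal_one]

section aux2

variable {Ω : Type*} [MeasurableSpace Ω] {μ : Measure Ω} [IsProbabilityMeasure μ]

lemma integrable_of_bdd {u : Ω → ℝ} (hm : Measurable u) {C : ℝ} (hb : ∀ ω, |u ω| ≤ C) :
    Integrable u μ :=
  (integrable_const C).mono' hm.aestronglyMeasurable
    (Filter.Eventually.of_forall fun ω => by simpa [Real.norm_eq_abs] using hb ω)

lemma tsum_props (h : ℕ → Ω → ℝ) (hm : ∀ n, Measurable (h n)) (c : ℕ → ℝ)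
    (hc0 : ∀ n, 0 ≤ c n) (hb : ∀ n ω, |h n ω| ≤ c n) (hc : Summable c) :
    Measurable (fun ω => ∑' n, h n ω) ∧ Integrable (fun ω => ∑' n, h n ω) μ ∧
      ∫ ω, (∑' n, h n ω) ∂μ = ∑' n, ∫ ω, h n ω ∂μ := by
  have hsum : ∀ ω, Summable fun n => h n ω := fun ω =>
    Summable.of_abs (hc.of_nonneg_of_le (fun n => abs_nonneg _) (fun n => hb n ω))
  have hmeas : Measurable fun ω => ∑' n, h n ω := by
    apply measurable_of_tendsto_metrizable (f := fun N ω => ∑ n ∈ Finset.range N, h n ω)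
      (fun N => Finset.measurable_sum _ fun n _ => hm n)
    rw [tendsto_pi_nhds]
    exact fun ω => (hsum ω).hasSum.tendsto_sum_nat
  have hbd : ∀ ω, |∑' n, h n ω| ≤ ∑' n, c n := by
    intro ω
    have habs : Summable fun n => |h n ω| :=
      hc.of_nonneg_of_le (fun n => abs_nonneg _) (fun n => hb n ω)
    have h1 : ‖∑' n, h n ω‖ ≤ ∑' n, ‖h n ω‖ :=
      norm_tsum_le_tsum_norm (f := fun n => h n ω) (by simpa only [Real.norm_eq_abs] using habs)
    simp only [Real.norm_eq_abs] at h1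
    exact h1.trans (Summable.tsum_le_tsum (fun n => hb n ω) habs hc)
  refine ⟨hmeas, integrable_of_bdd hmeas hbd, ?_⟩
  apply integral_tsum (fun n => (hm n).aestronglyMeasurable)
  have hle : ∀ n, ∫⁻ ω, ‖h n ω‖₊ ∂μ ≤ ENNReal.ofReal (c n) := by
    intro n
    calc ∫⁻ ω, ‖h n ω‖₊ ∂μ ≤ ∫⁻ _, ENNReal.ofReal (c n) ∂μ := by
          apply lintegral_mono
          intro ω
          simp only [← enorm_eq_nnnorm, ← ofReal_norm]
          exact ENNReal.ofReal_le_ofReal (by simpa [Real.norm_eq_abs] using hb n ω)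
      _ = ENNReal.ofReal (c n) := by simp
  refine ne_of_lt (lt_of_le_of_lt (ENNReal.tsum_le_tsum hle) ?_)
  rw [← ENNReal.ofReal_tsum_of_nonneg hc0 hc]
  exact ENNReal.ofReal_lt_top

end aux2

lemma diff_abs_le {γ M fv : ℝ} (hγ0 : 0 ≤ γ) (hγ1 : γ ≤ 1)
    (hM : M ∈ Set.Icc (0:ℝ) 1) (hfv : fv ∈ Set.Icc (0:ℝ) 1) : |γ * M - fv| ≤ 1 := by
  have h1 : 0 ≤ γ * M := mul_nonneg hγ0 hM.1
  have h2 : γ * M ≤ γ := mul_le_of_le_one_right hγ0 hM.2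
  rw [abs_le]
  exact ⟨by linarith [hfv.2], by linarith [hfv.1]⟩

lemma pointwise_key (γ : ℝ) (hγ0 : 0 ≤ γ) (hγ1 : γ < 1)
    (inG : ℕ → Prop) (gg FF : ℕ → ℝ)
    (hgg : ∀ t, gg t ∈ Set.Icc (0:ℝ) 1) (hFF : ∀ t, FF t ∈ Set.Icc (0:ℝ) 1)
    (habs : ∀ t t', t < t' → inG t → ¬ inG t')
    (h0 : ¬ inG 0) :
    (∑' t : ℕ, γ^t * (if inG t then (1:ℝ) else 0)) - FF 0 ≤
      (∑' t : ℕ, if ∀ s ≤ t, ¬ inG s then γ^t * (γ * max (gg (t+1)) (FF (t+1)) - FF t) else 0)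
      + (if ∃ t, inG t then γ ^ sInf {t | inG t} *
          ((if inG (sInf {t | inG t}) then (1:ℝ) else 0) - gg (sInf {t | inG t})) else 0) := by
  have hMIcc : ∀ t : ℕ, max (gg t) (FF t) ∈ Set.Icc (0:ℝ) 1 :=
    fun t => ⟨le_max_of_le_left (hgg t).1, max_le (hgg t).2 (hFF t).2⟩
  by_cases hex : ∃ t, inG t
  · set N := sInf {t | inG t} with hN
    have hNG : inG N := Nat.sInf_mem hex
    have hmin : ∀ s, s < N → ¬ inG s := fun s hs => Nat.notMem_of_lt_sInf hs
    have hNpos : 0 < N := by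
      rcases Nat.eq_zero_or_pos N with h | h
      · exact absurd (h ▸ hNG) h0
      · exact h
    have hR : (∑' t : ℕ, γ^t * (if inG t then (1:ℝ) else 0)) = γ ^ N := by
      rw [tsum_eq_single N]
      · simp [hNG]
      · intro t ht
        have hni : ¬ inG t := by
          intro hin
          have h1 : N ≤ t := Nat.sInf_le hin
          exact habs N t (lt_of_le_of_ne h1 (Ne.symm ht)) hNG hin
        simp [hni]
    have hCiff : ∀ t : ℕ, (∀ s ≤ t, ¬ inG s) ↔ t < N := by
      intro t
      constructor
      · intro h
        by_contra h'
        exact h N (le_of_not_gt h') hNG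
      · intro ht s hs
        exact hmin s (lt_of_le_of_lt hs ht)
    have hA : (∑' t : ℕ, if ∀ s ≤ t, ¬ inG s then γ^t * (γ * max (gg (t+1)) (FF (t+1)) - FF t) else 0)
        = ∑ t ∈ Finset.range N, (γ^t * (γ * max (gg (t+1)) (FF (t+1)) - FF t)) := by
      rw [tsum_eq_sum (s := Finset.range N) ?_]
      · exact Finset.sum_congr rfl fun t ht => if_pos ((hCiff t).2 (Finset.mem_range.1 ht))
      · intro t ht
        rw [if_neg]
        rw [hCiff t]
        simpa using ht
    set u : ℕ → ℝ := fun t => if t = N then γ^N * gg N else γ^t * FF t with hu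
    have hsum_ge : ∑ t ∈ Finset.range N, (u (t+1) - u t)
        ≤ ∑ t ∈ Finset.range N, (γ^t * (γ * max (gg (t+1)) (FF (t+1)) - FF t)) := by
      apply Finset.sum_le_sum
      intro t ht
      have htN : t < N := Finset.mem_range.1 ht
      have hut : u t = γ^t * FF t := if_neg (Nat.ne_of_lt htN)
      have hut1 : u (t+1) ≤ γ^(t+1) * max (gg (t+1)) (FF (t+1)) := by
        by_cases h : t + 1 = N
        · rw [hu]
          simp only [if_pos h, ← h]
          exact mul_le_mul_of_nonneg_left (le_max_left _ _) (pow_nonneg hγ0 _)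
        · rw [hu]
          simp only [if_neg h]
          exact mul_le_mul_of_nonneg_left (le_max_right _ _) (pow_nonneg hγ0 _)
      have he : γ^t * (γ * max (gg (t+1)) (FF (t+1)) - FF t)
          = γ^(t+1) * max (gg (t+1)) (FF (t+1)) - γ^t * FF t := by ring
      rw [hut, he]
      linarith
    have htel : ∑ t ∈ Finset.range N, (u (t+1) - u t) = γ^N * gg N - FF 0 := by
      rw [Finset.sum_range_sub u]
      have h1 : u N = γ^N * gg N := if_pos rfl
      have h2 : u 0 = FF 0 := by
        rw [hu]
        simp only [if_neg (Nat.ne_of_lt hNpos)]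
        simp
      rw [h1, h2]
    rw [hR, hA, if_pos hex, if_pos hNG]
    have hfin : γ^N * gg N - FF 0 ≤ ∑ t ∈ Finset.range N, (γ^t * (γ * max (gg (t+1)) (FF (t+1)) - FF t)) := by
      rw [← htel]; exact hsum_ge
    nlinarith [hfin]
  · have hnot : ∀ t, ¬ inG t := fun t ht => hex ⟨t, ht⟩
    have hR : (∑' t : ℕ, γ^t * (if inG t then (1:ℝ) else 0)) = 0 := by
      convert tsum_zero with t
      simp [hnot t]
    rw [hR, if_neg hex, add_zero]
    have hA : (∑' t : ℕ, if ∀ s ≤ t, ¬ inG s then γ^t * (γ * max (gg (t+1)) (FF (t+1)) - FF t) else 0)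
        = ∑' t : ℕ, γ^t * (γ * max (gg (t+1)) (FF (t+1)) - FF t) :=
      tsum_congr fun t => if_pos fun s _ => hnot s
    rw [hA]
    set v : ℕ → ℝ := fun t => γ^t * FF t with hv
    have hvb : ∀ t, |v t| ≤ γ ^ t := by
      intro t
      rw [hv]
      simp only []
      rw [abs_mul, abs_of_nonneg (pow_nonneg hγ0 t), abs_of_nonneg (hFF t).1]
      exact mul_le_of_le_one_right (pow_nonneg hγ0 t) (hFF t).2
    have hgeo : Summable fun t : ℕ => γ ^ t := summable_geometric_of_lt_one hγ0 hγ1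
    have hdb : ∀ t, |v (t+1) - v t| ≤ 2 * γ ^ t := by
      intro t
      have h1 := hvb (t+1)
      have h2 := hvb t
      have h3 : γ^(t+1) ≤ γ^t := pow_le_pow_of_le_one hγ0 hγ1.le (Nat.le_succ t)
      calc |v (t+1) - v t| ≤ |v (t+1)| + |v t| := abs_sub _ _
        _ ≤ 2 * γ^t := by linarith
    have hd : Summable fun t => v (t+1) - v t :=
      Summable.of_abs ((hgeo.mul_left 2).of_nonneg_of_le (fun t => abs_nonneg _) hdb)
    have htermb : ∀ t, |γ^t * (γ * max (gg (t+1)) (FF (t+1)) - FF t)| ≤ γ^t := by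
      intro t
      rw [abs_mul, abs_of_nonneg (pow_nonneg hγ0 t)]
      exact mul_le_of_le_one_right (pow_nonneg hγ0 t)
        (diff_abs_le hγ0 hγ1.le (hMIcc (t+1)) (hFF t))
    have hsumterm : Summable fun t => γ^t * (γ * max (gg (t+1)) (FF (t+1)) - FF t) :=
      Summable.of_abs (hgeo.of_nonneg_of_le (fun t => abs_nonneg _) htermb)
    have htel : (∑' t, (v (t+1) - v t)) = - v 0 := by
      have h2 := hd.hasSum.tendsto_sum_nat
      have h3 : (fun N => ∑ t ∈ Finset.range N, (v (t+1) - v t)) = fun N => v N - v 0 := by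
        funext N
        exact Finset.sum_range_sub v N
      rw [h3] at h2
      have hv0 : Filter.Tendsto v Filter.atTop (nhds 0) := by
        apply squeeze_zero_norm (by simpa [Real.norm_eq_abs] using hvb)
        exact tendsto_pow_atTop_nhds_zero_of_lt_one hγ0 hγ1
      have h4 : Filter.Tendsto (fun N => v N - v 0) Filter.atTop (nhds (0 - v 0)) :=
        hv0.sub tendsto_const_nhds
      have h5 := tendsto_nhds_unique h2 h4
      rw [h5]
      ring
    have hle : ∀ t, v (t+1) - v t ≤ γ^t * (γ * max (gg (t+1)) (FF (t+1)) - FF t) := by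
      intro t
      have h1 : v (t+1) ≤ γ^(t+1) * max (gg (t+1)) (FF (t+1)) :=
        mul_le_mul_of_nonneg_left (le_max_right _ _) (pow_nonneg hγ0 _)
      have he : γ^t * (γ * max (gg (t+1)) (FF (t+1)) - FF t)
          = γ^(t+1) * max (gg (t+1)) (FF (t+1)) - γ^t * FF t := by ring
      have hvt : v t = γ^t * FF t := rfl
      rw [he, hvt]
      linarith
    have hfin := Summable.tsum_le_tsum hle hd hsumterm
    rw [htel] at hfin
    have hv00 : v 0 = FF 0 := by rw [hv]; simp
    linarith

/-- Performance-difference decomposition for the augmented MDP. Let `μ`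
be the trajectory distribution of the policy `π` started from `d₀` (states `st`, actions
`ac`; `hMarkov` expresses that before the goal-hitting time the action `a_t` has
conditional law `π(x_t)`; `habs` expresses termination: the goal is never revisited;
`hinit` says the initial state is outside `G` a.s.). For any `f : X × A → [0,1]` and
`g : X → [0,1]` (components of an extended value function `f̄_g`, which vanishes on the
absorbing state), the underestimation satisfies
`Q^π(d₀,π) − f̄_g(d₀,π̄) ≤ E_π[∑_{t=0}^{T−1} γ^t (γ·max(g(x_{t+1}), f(x_{t+1},π)) −
f(x_t,a_t)) + γ^T (R(x_T) − g(x_T))]`, where `T = sInf {t | x_t ∈ G}` is the hitting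
time of `G`, `Q^π(d₀,π)` is the expected discounted return `E[∑_t γ^t 1(x_t ∈ G)]`,
`f̄_g(d₀,π̄) = E[f(x₀,π)]`, and `t < T` is expressed as `∀ s ≤ t, x_s ∉ G`. -/
theorem stmt8 {Ω X A : Type*} [MeasurableSpace Ω] [MeasurableSpace X] [Fintype A]
    (μ : Measure Ω) [IsProbabilityMeasure μ]
    (st : ℕ → Ω → X) (ac : ℕ → Ω → A)
    (hst : ∀ t, Measurable (st t))
    (G : Set X) (hG : MeasurableSet G)
    (π : X → PMF A)
    (γ : ℝ) (hγ0 : 0 ≤ γ) (hγ1 : γ < 1)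
    (f : X → A → ℝ) (g : X → ℝ)
    (hf : ∀ x a, f x a ∈ Set.Icc (0 : ℝ) 1) (hg : ∀ x, g x ∈ Set.Icc (0 : ℝ) 1)
    (hmf : ∀ t, Measurable fun ω => f (st t ω) (ac t ω))
    (hmg : Measurable g)
    (hmfπ : Measurable fun x => pexp (π x) (f x))
    (habs : ∀ ω (t t' : ℕ), t < t' → st t ω ∈ G → st t' ω ∉ G)
    (hinit : ∀ᵐ ω ∂μ, st 0 ω ∉ G)
    (hMarkov : ∀ t : ℕ,
      ∫ ω, (if ∀ s ≤ t, st s ω ∉ G then f (st t ω) (ac t ω) else 0) ∂μ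
        = ∫ ω, (if ∀ s ≤ t, st s ω ∉ G then pexp (π (st t ω)) (f (st t ω)) else 0) ∂μ) :
    (∫ ω, (∑' t : ℕ, γ ^ t * (if st t ω ∈ G then (1 : ℝ) else 0)) ∂μ)
        - (∫ ω, pexp (π (st 0 ω)) (f (st 0 ω)) ∂μ)
      ≤ ∫ ω,
          ((∑' t : ℕ, if ∀ s ≤ t, st s ω ∉ G then
              γ ^ t * (γ * max (g (st (t + 1) ω)) (pexp (π (st (t + 1) ω)) (f (st (t + 1) ω)))
                - f (st t ω) (ac t ω))
            else 0)
          + (if ∃ t, st t ω ∈ G then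
              γ ^ sInf {t | st t ω ∈ G}
                * ((if st (sInf {t | st t ω ∈ G}) ω ∈ G then (1 : ℝ) else 0)
                    - g (st (sInf {t | st t ω ∈ G}) ω))
            else 0)) ∂μ := by
  have hγ1' : γ ≤ 1 := hγ1.le
  have hgeo : Summable fun t : ℕ => γ ^ t := summable_geometric_of_lt_one hγ0 hγ1
  have hγt : ∀ t : ℕ, (0:ℝ) ≤ γ ^ t := fun t => pow_nonneg hγ0 t
  have hFI : ∀ x, pexp (π x) (f x) ∈ Set.Icc (0:ℝ) 1 := fun x => pexp_mem _ _ (hf x)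
  have hMI : ∀ x, max (g x) (pexp (π x) (f x)) ∈ Set.Icc (0:ℝ) 1 :=
    fun x => ⟨le_max_of_le_left (hg x).1, max_le (hg x).2 (hFI x).2⟩
  have habs01 : ∀ x : ℝ, x ∈ Set.Icc (0:ℝ) 1 → |x| ≤ 1 :=
    fun x hx => abs_le.2 ⟨by linarith [hx.1], hx.2⟩
  have hCset : ∀ t : ℕ, MeasurableSet {ω | ∀ s ≤ t, st s ω ∉ G} := by
    intro t
    have h : {ω | ∀ s ≤ t, st s ω ∉ G} = ⋂ s ∈ Set.Iic t, (st s) ⁻¹' Gᶜ := by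
      ext ω; simp [Set.mem_iInter]
    rw [h]
    exact MeasurableSet.biInter (Set.to_countable _) fun s _ => (hst s) hG.compl
  have hMm : Measurable fun x => max (g x) (pexp (π x) (f x)) := hmg.max hmfπ
  -- properties of the tsum with f (actions)
  obtain ⟨hAm, hAint, hAeq⟩ := tsum_props (μ := μ)
    (fun t ω => if ∀ s ≤ t, st s ω ∉ G then
        γ ^ t * (γ * max (g (st (t + 1) ω)) (pexp (π (st (t + 1) ω)) (f (st (t + 1) ω)))
          - f (st t ω) (ac t ω)) else 0)
    (fun t => Measurable.ite (hCset t)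
      (((((hMm.comp (hst (t+1))).const_mul γ).sub (hmf t)).const_mul (γ^t))) measurable_const)
    (fun t => γ ^ t) hγt
    (fun t ω => by
      by_cases h : ∀ s ≤ t, st s ω ∉ G
      · rw [if_pos h, abs_mul, abs_of_nonneg (hγt t)]
        exact mul_le_of_le_one_right (hγt t) (diff_abs_le hγ0 hγ1' (hMI _) (hf _ _))
      · rw [if_neg h]; simpa using hγt t) hgeo
  -- properties of the tsum with pexp
  obtain ⟨hA'm, hA'int, hA'eq⟩ := tsum_props (μ := μ)
    (fun t ω => if ∀ s ≤ t, st s ω ∉ G then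
        γ ^ t * (γ * max (g (st (t + 1) ω)) (pexp (π (st (t + 1) ω)) (f (st (t + 1) ω)))
          - pexp (π (st t ω)) (f (st t ω))) else 0)
    (fun t => Measurable.ite (hCset t)
      (((((hMm.comp (hst (t+1))).const_mul γ).sub (hmfπ.comp (hst t))).const_mul (γ^t)))
      measurable_const)
    (fun t => γ ^ t) hγt
    (fun t ω => by
      by_cases h : ∀ s ≤ t, st s ω ∉ G
      · rw [if_pos h, abs_mul, abs_of_nonneg (hγt t)]
        exact mul_le_of_le_one_right (hγt t) (diff_abs_le hγ0 hγ1' (hMI _) (hFI _))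
      · rw [if_neg h]; simpa using hγt t) hgeo
  -- properties of the reward tsum
  obtain ⟨hRm, hRint, hReq⟩ := tsum_props (μ := μ)
    (fun t ω => γ ^ t * (if st t ω ∈ G then (1:ℝ) else 0))
    (fun t => (Measurable.ite ((hst t) hG) measurable_const measurable_const).const_mul (γ^t))
    (fun t => γ ^ t) hγt
    (fun t ω => by
      rw [abs_mul, abs_of_nonneg (hγt t)]
      by_cases h : st t ω ∈ G <;> simp [h, hγt t]) hgeo
  -- the B term as a tsum
  have hBset : ∀ t : ℕ, MeasurableSet {ω | st t ω ∈ G ∧ ∀ s < t, st s ω ∉ G} := by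
    intro t
    have h : {ω | st t ω ∈ G ∧ ∀ s < t, st s ω ∉ G}
        = (st t ⁻¹' G) ∩ ⋂ s ∈ Set.Iio t, (st s) ⁻¹' Gᶜ := by
      ext ω; simp [Set.mem_iInter]
    rw [h]
    exact ((hst t) hG).inter
      (MeasurableSet.biInter (Set.to_countable _) fun s _ => (hst s) hG.compl)
  obtain ⟨hBm, hBint0, _⟩ := tsum_props (μ := μ)
    (fun t ω => if st t ω ∈ G ∧ ∀ s < t, st s ω ∉ G then
        γ ^ t * ((if st t ω ∈ G then (1:ℝ) else 0) - g (st t ω)) else 0)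
    (fun t => Measurable.ite (hBset t)
      (((Measurable.ite ((hst t) hG) measurable_const measurable_const).sub
        (hmg.comp (hst t))).const_mul (γ^t)) measurable_const)
    (fun t => γ ^ t) hγt
    (fun t ω => by
      by_cases h : st t ω ∈ G ∧ ∀ s < t, st s ω ∉ G
      · rw [if_pos h, abs_mul, abs_of_nonneg (hγt t)]
        refine mul_le_of_le_one_right (hγt t) (abs_le.2 ⟨?_, ?_⟩)
        · by_cases h' : st t ω ∈ G <;> simp [h'] <;> linarith [(hg (st t ω)).1, (hg (st t ω)).2]
        · by_cases h' : st t ω ∈ G <;> simp [h'] <;> linarith [(hg (st t ω)).1, (hg (st t ω)).2]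
      · rw [if_neg h]; simpa using hγt t) hgeo
  have hBeq : ∀ ω, (if ∃ t, st t ω ∈ G then
        γ ^ sInf {t | st t ω ∈ G}
          * ((if st (sInf {t | st t ω ∈ G}) ω ∈ G then (1 : ℝ) else 0)
              - g (st (sInf {t | st t ω ∈ G}) ω))
      else 0)
      = ∑' t : ℕ, (if st t ω ∈ G ∧ ∀ s < t, st s ω ∉ G then
          γ ^ t * ((if st t ω ∈ G then (1:ℝ) else 0) - g (st t ω)) else 0) := by
    intro ω
    by_cases hex : ∃ t, st t ω ∈ G
    · set N := sInf {t | st t ω ∈ G} with hN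
      have hNG : st N ω ∈ G := Nat.sInf_mem hex
      have hmin : ∀ s, s < N → st s ω ∉ G := fun s hs => Nat.notMem_of_lt_sInf hs
      have h1 : (∑' t : ℕ, (if st t ω ∈ G ∧ ∀ s < t, st s ω ∉ G then
          γ ^ t * ((if st t ω ∈ G then (1:ℝ) else 0) - g (st t ω)) else 0))
          = (if st N ω ∈ G ∧ ∀ s < N, st s ω ∉ G then
          γ ^ N * ((if st N ω ∈ G then (1:ℝ) else 0) - g (st N ω)) else 0) := by
        apply tsum_eq_single N
        intro t ht
        rw [if_neg]
        rintro ⟨h2, h3⟩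
        have h4 : N ≤ t := Nat.sInf_le h2
        exact h3 N (lt_of_le_of_ne h4 (Ne.symm ht)) hNG
      rw [h1, if_pos hex]
      simp only [if_pos hNG]
      rw [if_pos (show st N ω ∈ G ∧ ∀ s < N, st s ω ∉ G from ⟨hNG, hmin⟩)]
    · rw [if_neg hex]
      symm
      convert tsum_zero with t
      rw [if_neg]
      rintro ⟨h1, -⟩
      exact hex ⟨t, h1⟩
  have hBint : Integrable (fun ω => if ∃ t, st t ω ∈ G then
        γ ^ sInf {t | st t ω ∈ G}
          * ((if st (sInf {t | st t ω ∈ G}) ω ∈ G then (1 : ℝ) else 0)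
              - g (st (sInf {t | st t ω ∈ G}) ω))
      else 0) μ := by
    have h : (fun ω => if ∃ t, st t ω ∈ G then
        γ ^ sInf {t | st t ω ∈ G}
          * ((if st (sInf {t | st t ω ∈ G}) ω ∈ G then (1 : ℝ) else 0)
              - g (st (sInf {t | st t ω ∈ G}) ω))
      else 0) = fun ω => ∑' t : ℕ, (if st t ω ∈ G ∧ ∀ s < t, st s ω ∉ G then
          γ ^ t * ((if st t ω ∈ G then (1:ℝ) else 0) - g (st t ω)) else 0) := funext hBeq
    rw [h]
    exact hBint0
  have hF0int : Integrable (fun ω => pexp (π (st 0 ω)) (f (st 0 ω))) μ :=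
    integrable_of_bdd (hmfπ.comp (hst 0)) (C := 1) (fun ω => habs01 _ (hFI _))
  -- Markov substitution for each term
  have hkey : ∀ t : ℕ,
      (∫ ω, (if ∀ s ≤ t, st s ω ∉ G then
        γ ^ t * (γ * max (g (st (t + 1) ω)) (pexp (π (st (t + 1) ω)) (f (st (t + 1) ω)))
          - f (st t ω) (ac t ω)) else 0) ∂μ)
      = ∫ ω, (if ∀ s ≤ t, st s ω ∉ G then
        γ ^ t * (γ * max (g (st (t + 1) ω)) (pexp (π (st (t + 1) ω)) (f (st (t + 1) ω)))
          - pexp (π (st t ω)) (f (st t ω))) else 0) ∂μ := by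
    intro t
    have hiM : Integrable (fun ω => if ∀ s ≤ t, st s ω ∉ G then
        max (g (st (t + 1) ω)) (pexp (π (st (t + 1) ω)) (f (st (t + 1) ω))) else 0) μ := by
      apply integrable_of_bdd (Measurable.ite (hCset t) (hMm.comp (hst (t+1))) measurable_const)
        (C := 1)
      intro ω
      by_cases h : ∀ s ≤ t, st s ω ∉ G
      · rw [if_pos h]; exact habs01 _ (hMI _)
      · rw [if_neg h]; simp
    have hif : Integrable (fun ω => if ∀ s ≤ t, st s ω ∉ G then f (st t ω) (ac t ω) else 0) μ := by
      apply integrable_of_bdd (Measurable.ite (hCset t) (hmf t) measurable_const) (C := 1)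
      intro ω
      by_cases h : ∀ s ≤ t, st s ω ∉ G
      · rw [if_pos h]; exact habs01 _ (hf _ _)
      · rw [if_neg h]; simp
    have hiF : Integrable (fun ω => if ∀ s ≤ t, st s ω ∉ G then
        pexp (π (st t ω)) (f (st t ω)) else 0) μ := by
      apply integrable_of_bdd (Measurable.ite (hCset t) (hmfπ.comp (hst t)) measurable_const)
        (C := 1)
      intro ω
      by_cases h : ∀ s ≤ t, st s ω ∉ G
      · rw [if_pos h]; exact habs01 _ (hFI _)
      · rw [if_neg h]; simp
    have e1 : ∀ ω, (if ∀ s ≤ t, st s ω ∉ G then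
        γ ^ t * (γ * max (g (st (t + 1) ω)) (pexp (π (st (t + 1) ω)) (f (st (t + 1) ω)))
          - f (st t ω) (ac t ω)) else 0)
        = γ ^ (t+1) * (if ∀ s ≤ t, st s ω ∉ G then
            max (g (st (t + 1) ω)) (pexp (π (st (t + 1) ω)) (f (st (t + 1) ω))) else 0)
          - γ ^ t * (if ∀ s ≤ t, st s ω ∉ G then f (st t ω) (ac t ω) else 0) := by
      intro ω
      by_cases h : ∀ s ≤ t, st s ω ∉ G
      · rw [if_pos h, if_pos h, if_pos h]; ring
      · rw [if_neg h, if_neg h, if_neg h]; ring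
    have e2 : ∀ ω, (if ∀ s ≤ t, st s ω ∉ G then
        γ ^ t * (γ * max (g (st (t + 1) ω)) (pexp (π (st (t + 1) ω)) (f (st (t + 1) ω)))
          - pexp (π (st t ω)) (f (st t ω))) else 0)
        = γ ^ (t+1) * (if ∀ s ≤ t, st s ω ∉ G then
            max (g (st (t + 1) ω)) (pexp (π (st (t + 1) ω)) (f (st (t + 1) ω))) else 0)
          - γ ^ t * (if ∀ s ≤ t, st s ω ∉ G then pexp (π (st t ω)) (f (st t ω)) else 0) := by
      intro ω
      by_cases h : ∀ s ≤ t, st s ω ∉ G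
      · rw [if_pos h, if_pos h, if_pos h]; ring
      · rw [if_neg h, if_neg h, if_neg h]; ring
    simp only [e1, e2]
    rw [integral_sub (hiM.const_mul _) (hif.const_mul _),
      integral_sub (hiM.const_mul _) (hiF.const_mul _),
      integral_const_mul, integral_const_mul, integral_const_mul, hMarkov t]
  -- pointwise a.e. inequality
  have hpt : ∀ᵐ ω ∂μ,
      (∑' t : ℕ, γ ^ t * (if st t ω ∈ G then (1 : ℝ) else 0))
          - pexp (π (st 0 ω)) (f (st 0 ω))
        ≤ (∑' t : ℕ, if ∀ s ≤ t, st s ω ∉ G then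
              γ ^ t * (γ * max (g (st (t + 1) ω)) (pexp (π (st (t + 1) ω)) (f (st (t + 1) ω)))
                - pexp (π (st t ω)) (f (st t ω))) else 0)
          + (if ∃ t, st t ω ∈ G then
              γ ^ sInf {t | st t ω ∈ G}
                * ((if st (sInf {t | st t ω ∈ G}) ω ∈ G then (1 : ℝ) else 0)
                    - g (st (sInf {t | st t ω ∈ G}) ω))
            else 0) := by
    filter_upwards [hinit] with ω h0
    exact pointwise_key γ hγ0 hγ1 (fun t => st t ω ∈ G) (fun t => g (st t ω))
      (fun t => pexp (π (st t ω)) (f (st t ω))) (fun t => hg _) (fun t => hFI _)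
      (fun t t' h ht => habs ω t t' h ht) h0
  -- assemble
  have e1 : (∫ ω,
          ((∑' t : ℕ, if ∀ s ≤ t, st s ω ∉ G then
              γ ^ t * (γ * max (g (st (t + 1) ω)) (pexp (π (st (t + 1) ω)) (f (st (t + 1) ω)))
                - f (st t ω) (ac t ω))
            else 0)
          + (if ∃ t, st t ω ∈ G then
              γ ^ sInf {t | st t ω ∈ G}
                * ((if st (sInf {t | st t ω ∈ G}) ω ∈ G then (1 : ℝ) else 0)
                    - g (st (sInf {t | st t ω ∈ G}) ω))
            else 0)) ∂μ)
      = (∫ ω, (∑' t : ℕ, if ∀ s ≤ t, st s ω ∉ G then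
              γ ^ t * (γ * max (g (st (t + 1) ω)) (pexp (π (st (t + 1) ω)) (f (st (t + 1) ω)))
                - f (st t ω) (ac t ω))
            else 0) ∂μ)
        + ∫ ω, (if ∃ t, st t ω ∈ G then
              γ ^ sInf {t | st t ω ∈ G}
                * ((if st (sInf {t | st t ω ∈ G}) ω ∈ G then (1 : ℝ) else 0)
                    - g (st (sInf {t | st t ω ∈ G}) ω))
            else 0) ∂μ := integral_add hAint hBint
  have e2 : (∫ ω, (∑' t : ℕ, if ∀ s ≤ t, st s ω ∉ G then
              γ ^ t * (γ * max (g (st (t + 1) ω)) (pexp (π (st (t + 1) ω)) (f (st (t + 1) ω)))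
                - f (st t ω) (ac t ω))
            else 0) ∂μ)
      = ∫ ω, (∑' t : ℕ, if ∀ s ≤ t, st s ω ∉ G then
              γ ^ t * (γ * max (g (st (t + 1) ω)) (pexp (π (st (t + 1) ω)) (f (st (t + 1) ω)))
                - pexp (π (st t ω)) (f (st t ω)))
            else 0) ∂μ := by
    rw [hAeq, hA'eq]
    exact tsum_congr hkey
  have e3 : (∫ ω, (∑' t : ℕ, γ ^ t * (if st t ω ∈ G then (1 : ℝ) else 0)) ∂μ)
        - (∫ ω, pexp (π (st 0 ω)) (f (st 0 ω)) ∂μ)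
      = ∫ ω, ((∑' t : ℕ, γ ^ t * (if st t ω ∈ G then (1 : ℝ) else 0))
          - pexp (π (st 0 ω)) (f (st 0 ω))) ∂μ := (integral_sub hRint hF0int).symm
  have e4 : (∫ ω, ((∑' t : ℕ, γ ^ t * (if st t ω ∈ G then (1 : ℝ) else 0))
          - pexp (π (st 0 ω)) (f (st 0 ω))) ∂μ)
      ≤ ∫ ω, ((∑' t : ℕ, if ∀ s ≤ t, st s ω ∉ G then
              γ ^ t * (γ * max (g (st (t + 1) ω)) (pexp (π (st (t + 1) ω)) (f (st (t + 1) ω)))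
                - pexp (π (st t ω)) (f (st t ω)))
            else 0)
          + (if ∃ t, st t ω ∈ G then
              γ ^ sInf {t | st t ω ∈ G}
                * ((if st (sInf {t | st t ω ∈ G}) ω ∈ G then (1 : ℝ) else 0)
                    - g (st (sInf {t | st t ω ∈ G}) ω))
            else 0)) ∂μ :=
    integral_mono_ae (hRint.sub hF0int) (hA'int.add hBint) hpt
  have e5 : (∫ ω, ((∑' t : ℕ, if ∀ s ≤ t, st s ω ∉ G then
              γ ^ t * (γ * max (g (st (t + 1) ω)) (pexp (π (st (t + 1) ω)) (f (st (t + 1) ω)))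
                - pexp (π (st t ω)) (f (st t ω)))
            else 0)
          + (if ∃ t, st t ω ∈ G then
              γ ^ sInf {t | st t ω ∈ G}
                * ((if st (sInf {t | st t ω ∈ G}) ω ∈ G then (1 : ℝ) else 0)
                    - g (st (sInf {t | st t ω ∈ G}) ω))
            else 0)) ∂μ)
      = (∫ ω, (∑' t : ℕ, if ∀ s ≤ t, st s ω ∉ G then
              γ ^ t * (γ * max (g (st (t + 1) ω)) (pexp (π (st (t + 1) ω)) (f (st (t + 1) ω)))
                - pexp (π (st t ω)) (f (st t ω)))
            else 0) ∂μ)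
        + ∫ ω, (if ∃ t, st t ω ∈ G then
              γ ^ sInf {t | st t ω ∈ G}
                * ((if st (sInf {t | st t ω ∈ G}) ω ∈ G then (1 : ℝ) else 0)
                    - g (st (sInf {t | st t ω ∈ G}) ω))
            else 0) ∂μ := integral_add hA'int hBint
  linarith
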